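/- Let (G, p) be a finite critical net in ℝ^k satisfying the balance condition. Let v ∈ EuclideanSpace ℝ (Fin k) with ‖v‖ = 1 and λ ∈ ℝ be such that ⟪p x, v⟫ ≠ λ for every vertex x. Then the absolute value of the current through the hyperplane {⟪·, v⟫ = λ} is at most half the number of leaves: |∑_{edges {x,y} of G with ⟪p x, v⟫ < λ < ⟪p y, v⟫} ⟪(p y − p x)/‖p y − p x‖, v⟫| ≤ |∂X| / 2. -/
import Mathlib

open scoped RealInnerProductSpace

private lemma skew_sum_zero {V : Type*} [Fintype V] (c : V → V → ℝ)
    (hskew : ∀ x y : V, c y x = - c x y)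
    (P : V → V → Prop) [∀ x y, Decidable (P x y)]
    (hP : ∀ x y : V, P x y ↔ P y x) :
    (∑ x : V, ∑ y : V, if P x y then c x y else 0) = 0 := by
  have h1 : (∑ x : V, ∑ y : V, if P x y then c x y else 0)
      = ∑ x : V, ∑ y : V, -(if P x y then c x y else 0) := by
    rw [Finset.sum_comm]
    refine Finset.sum_congr rfl fun a _ => Finset.sum_congr rfl fun b _ => ?_
    by_cases h : P a b
    · rw [if_pos ((hP a b).mp h), if_pos h, hskew a b]
    · rw [if_neg (fun h' => h ((hP b a).mp h')), if_neg h, neg_zero]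
  simp only [Finset.sum_neg_distrib] at h1
  linarith

/-- In a finite critical net in `ℝ^k` satisfying the balance
condition, for a unit direction `v` and a level `lam` avoided by all vertices, the
absolute value of the current through the hyperplane `{⟪·, v⟫ = lam}` (each crossing
edge counted once, with the orientation `x → y` going upward) is at most half the
number of leaves. -/
theorem abs_current_through_cut_le_half_card_leaves
    {k : ℕ} (hk : 1 ≤ k) {V : Type*} [Fintype V] [DecidableEq V]
    (G : SimpleGraph V) [DecidableRel G.Adj]
    (p : V → EuclideanSpace ℝ (Fin k)) (hinj : Function.Injective p)
    (hdeg1 : ∀ x : V, 1 ≤ G.degree x)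
    (hnoLL : ∀ x y : V, G.Adj x y → ¬(G.degree x = 1 ∧ G.degree y = 1))
    (hbal : ∀ x : V, 2 ≤ G.degree x →
      ∑ y ∈ G.neighborFinset x, (‖p x - p y‖)⁻¹ • (p x - p y) = 0)
    (v : EuclideanSpace ℝ (Fin k)) (hv : ‖v‖ = 1) (lam : ℝ)
    (hlam : ∀ x : V, ⟪p x, v⟫ ≠ lam) :
    |∑ x : V, ∑ y ∈ G.neighborFinset x,
        (if ⟪p x, v⟫ < lam ∧ lam < ⟪p y, v⟫
          then ⟪(‖p y - p x‖)⁻¹ • (p y - p x), v⟫ else 0)|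
      ≤ (Finset.univ.filter fun l : V => G.degree l = 1).card / 2 := by
  classical
  set c : V → V → ℝ := fun x y => ⟪(‖p x - p y‖)⁻¹ • (p x - p y), v⟫ with hc
  have hskew : ∀ x y : V, c y x = - c x y := by
    intro x y
    show ⟪(‖p y - p x‖)⁻¹ • (p y - p x), v⟫ = -⟪(‖p x - p y‖)⁻¹ • (p x - p y), v⟫
    rw [show p y - p x = -(p x - p y) by abel, norm_neg, smul_neg, inner_neg_left]
  have hbound : ∀ x y : V, |c x y| ≤ 1 := by
    intro x y
    have h1 := abs_real_inner_le_norm ((‖p x - p y‖)⁻¹ • (p x - p y)) v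
    rw [hv, mul_one, norm_smul, norm_inv, norm_norm] at h1
    refine h1.trans ?_
    rcases eq_or_ne (p x - p y) 0 with h | h
    · simp [h]
    · rw [inv_mul_cancel₀ (norm_ne_zero_iff.mpr h)]
  set S : V → ℝ := fun x => ∑ y : V, if G.Adj x y then c x y else 0 with hSdef
  have hSalt : ∀ x, S x = ∑ y ∈ G.neighborFinset x, c x y := by
    intro x
    rw [SimpleGraph.neighborFinset_eq_filter, Finset.sum_filter]
  have hSint : ∀ x, 2 ≤ G.degree x → S x = 0 := by
    intro x hx
    rw [hSalt]
    show ∑ y ∈ G.neighborFinset x, ⟪(‖p x - p y‖)⁻¹ • (p x - p y), v⟫ = 0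
    rw [← sum_inner, hbal x hx, inner_zero_left]
  -- counting bound
  have hcount : ∀ s : Finset V,
      |∑ x ∈ s, S x| ≤ ((s.filter (fun x => G.degree x = 1)).card : ℝ) := by
    intro s
    rw [← Finset.sum_filter_of_ne (p := fun x => G.degree x = 1)
      (fun x _ hS => by
        by_contra hdeg
        have h2 : 2 ≤ G.degree x := by have := hdeg1 x; omega
        exact hS (hSint x h2))]
    calc |∑ x ∈ s.filter (fun x => G.degree x = 1), S x|
        ≤ ∑ x ∈ s.filter (fun x => G.degree x = 1), |S x| :=
          Finset.abs_sum_le_sum_abs _ _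
      _ ≤ ∑ _x ∈ s.filter (fun x => G.degree x = 1), (1 : ℝ) := by
          refine Finset.sum_le_sum fun x hx => ?_
          have hxd : G.degree x = 1 := (Finset.mem_filter.mp hx).2
          rw [hSalt]
          calc |∑ y ∈ G.neighborFinset x, c x y|
              ≤ ∑ y ∈ G.neighborFinset x, |c x y| := Finset.abs_sum_le_sum_abs _ _
            _ ≤ ∑ _y ∈ G.neighborFinset x, (1 : ℝ) :=
                Finset.sum_le_sum fun y _ => hbound x y
            _ = 1 := by
                rw [Finset.sum_const, nsmul_eq_mul, mul_one,
                  G.card_neighborFinset_eq_degree, hxd, Nat.cast_one]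
      _ = _ := by rw [Finset.sum_const, nsmul_eq_mul, mul_one]
  have hB : ∀ x : V, ¬ ⟪p x, v⟫ < lam ↔ lam < ⟪p x, v⟫ := fun x =>
    ⟨fun h => lt_of_le_of_ne (not_lt.mp h) (hlam x).symm, fun h => not_lt.mpr h.le⟩
  -- the current equals the negative of the double sum Σ2
  have hCur : (∑ x : V, ∑ y ∈ G.neighborFinset x,
        (if ⟪p x, v⟫ < lam ∧ lam < ⟪p y, v⟫
          then ⟪(‖p y - p x‖)⁻¹ • (p y - p x), v⟫ else 0))
      = -∑ x : V, ∑ y : V,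
          (if G.Adj x y ∧ ⟪p x, v⟫ < lam ∧ lam < ⟪p y, v⟫ then c x y else 0) := by
    rw [← Finset.sum_neg_distrib]
    refine Finset.sum_congr rfl fun x _ => ?_
    rw [← Finset.sum_neg_distrib, SimpleGraph.neighborFinset_eq_filter, Finset.sum_filter]
    refine Finset.sum_congr rfl fun y _ => ?_
    by_cases ha : G.Adj x y
    · by_cases hcnd : ⟪p x, v⟫ < lam ∧ lam < ⟪p y, v⟫
      · rw [if_pos ha, if_pos hcnd, if_pos ⟨ha, hcnd.1, hcnd.2⟩]
        exact hskew x y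
      · rw [if_pos ha, if_neg hcnd, if_neg (fun h => hcnd ⟨h.2.1, h.2.2⟩), neg_zero]
    · rw [if_neg ha, if_neg (fun h => ha h.1), neg_zero]
  -- sum of S over the lower part equals Σ2
  have hA2 : (∑ x ∈ Finset.univ.filter (fun x => ⟪p x, v⟫ < lam), S x)
      = ∑ x : V, ∑ y : V,
          (if G.Adj x y ∧ ⟪p x, v⟫ < lam ∧ lam < ⟪p y, v⟫ then c x y else 0) := by
    rw [Finset.sum_filter]
    have hsplit : ∀ x : V, (if ⟪p x, v⟫ < lam then S x else 0)
        = (∑ y : V, if G.Adj x y ∧ ⟪p x, v⟫ < lam ∧ ⟪p y, v⟫ < lam then c x y else 0)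
          + (∑ y : V, if G.Adj x y ∧ ⟪p x, v⟫ < lam ∧ lam < ⟪p y, v⟫ then c x y else 0) := by
      intro x
      by_cases hx : ⟪p x, v⟫ < lam
      · rw [if_pos hx, ← Finset.sum_add_distrib]
        refine Finset.sum_congr rfl fun y _ => ?_
        by_cases ha : G.Adj x y
        · by_cases hy : ⟪p y, v⟫ < lam
          · rw [if_pos ha, if_pos ⟨ha, hx, hy⟩,
              if_neg (fun h => absurd hy (not_lt.mpr h.2.2.le)), add_zero]
          · rw [if_pos ha, if_neg (fun h => hy h.2.2),
              if_pos ⟨ha, hx, (hB y).mp hy⟩, zero_add]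
        · rw [if_neg ha, if_neg (fun h => ha h.1), if_neg (fun h => ha h.1), add_zero]
      · rw [if_neg hx,
          Finset.sum_eq_zero (fun y _ => if_neg (fun h => hx h.2.1)),
          Finset.sum_eq_zero (fun y _ => if_neg (fun h => hx h.2.1)), add_zero]
    rw [Finset.sum_congr rfl (fun x _ => hsplit x), Finset.sum_add_distrib,
      skew_sum_zero c hskew _ (fun x y =>
        ⟨fun ⟨ha, h1, h2⟩ => ⟨ha.symm, h2, h1⟩, fun ⟨ha, h1, h2⟩ => ⟨ha.symm, h2, h1⟩⟩),
      zero_add]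
  -- sum of S over the upper part equals -Σ2
  have hB2 : (∑ x ∈ Finset.univ.filter (fun x => ¬ ⟪p x, v⟫ < lam), S x)
      = -∑ x : V, ∑ y : V,
          (if G.Adj x y ∧ ⟪p x, v⟫ < lam ∧ lam < ⟪p y, v⟫ then c x y else 0) := by
    rw [Finset.sum_filter]
    have hsplit : ∀ x : V, (if ¬ ⟪p x, v⟫ < lam then S x else 0)
        = (∑ y : V, if G.Adj x y ∧ lam < ⟪p x, v⟫ ∧ lam < ⟪p y, v⟫ then c x y else 0)
          + (∑ y : V, if G.Adj x y ∧ lam < ⟪p x, v⟫ ∧ ⟪p y, v⟫ < lam then c x y else 0) := by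
      intro x
      by_cases hx : ⟪p x, v⟫ < lam
      · rw [if_neg (fun h => h hx),
          Finset.sum_eq_zero (fun y _ => if_neg (fun h => absurd hx (not_lt.mpr h.2.1.le))),
          Finset.sum_eq_zero (fun y _ => if_neg (fun h => absurd hx (not_lt.mpr h.2.1.le))),
          add_zero]
      · rw [if_pos hx, ← Finset.sum_add_distrib]
        have hx' : lam < ⟪p x, v⟫ := (hB x).mp hx
        refine Finset.sum_congr rfl fun y _ => ?_
        by_cases ha : G.Adj x y
        · by_cases hy : ⟪p y, v⟫ < lam
          · rw [if_pos ha, if_neg (fun h => absurd hy (not_lt.mpr h.2.2.le)),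
              if_pos ⟨ha, hx', hy⟩, zero_add]
          · rw [if_pos ha, if_pos ⟨ha, hx', (hB y).mp hy⟩,
              if_neg (fun h => hy h.2.2), add_zero]
        · rw [if_neg ha, if_neg (fun h => ha h.1), if_neg (fun h => ha h.1), add_zero]
    rw [Finset.sum_congr rfl (fun x _ => hsplit x), Finset.sum_add_distrib,
      skew_sum_zero c hskew _ (fun x y =>
        ⟨fun ⟨ha, h1, h2⟩ => ⟨ha.symm, h2, h1⟩, fun ⟨ha, h1, h2⟩ => ⟨ha.symm, h2, h1⟩⟩),
      zero_add]
    rw [Finset.sum_comm, ← Finset.sum_neg_distrib]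
    refine Finset.sum_congr rfl fun a _ => ?_
    rw [← Finset.sum_neg_distrib]
    refine Finset.sum_congr rfl fun b _ => ?_
    by_cases h : G.Adj a b ∧ ⟪p a, v⟫ < lam ∧ lam < ⟪p b, v⟫
    · rw [if_pos ⟨h.1.symm, h.2.2, h.2.1⟩, if_pos h, hskew a b]
    · rw [if_neg (fun h' => h ⟨h'.1.symm, h'.2.2, h'.2.1⟩), if_neg h, neg_zero]
  -- assemble
  have h1 := hcount (Finset.univ.filter (fun x => ⟪p x, v⟫ < lam))
  have h2 := hcount (Finset.univ.filter (fun x => ¬ ⟪p x, v⟫ < lam))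
  rw [hA2] at h1
  rw [hB2, abs_neg] at h2
  rw [hCur, abs_neg]
  have swap : ∀ (q : V → Prop) (_ : DecidablePred q),
      ((Finset.univ.filter q).filter (fun x => G.degree x = 1)).card
        = ((Finset.univ.filter (fun x => G.degree x = 1)).filter q).card := by
    intro q _
    congr 1
    ext x
    simp [Finset.mem_filter, and_comm]
  rw [swap _ (fun x => inferInstance)] at h1
  rw [swap _ (fun x => inferInstance)] at h2
  have hcard := Finset.card_filter_add_card_filter_not
    (s := Finset.univ.filter (fun x : V => G.degree x = 1))
    (fun x => ⟪p x, v⟫ < lam)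
  have hcard' : (((Finset.univ.filter (fun x : V => G.degree x = 1)).filter
        (fun x => ⟪p x, v⟫ < lam)).card : ℝ)
      + (((Finset.univ.filter (fun x : V => G.degree x = 1)).filter
        (fun x => ¬ ⟪p x, v⟫ < lam)).card : ℝ)
      = ((Finset.univ.filter (fun x : V => G.degree x = 1)).card : ℝ) := by
    exact_mod_cast congrArg (Nat.cast : ℕ → ℝ) hcard
  linarith
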